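/- Let G = (A∪B, E) be a Δ-regular bipartite graph (|A|=|B|=n) with eigenvalue ratio γ, and let C be the expander code built from local codes C_A (relative distance δ_A) on A-vertices and C_B (relative distance δ_B) on B-vertices. Then the relative minimum distance of C is at least (δ_Aδ_B − γ√(δ_Aδ_B))/(1−γ), provided γ ≤ √(δ_Aδ_B). -/

import Mathlib

open Finset

set_option maxHeartbeats 1000000

/-- Minimum-distance bound for expander codes: if C_A and C_B (the local codes on the
A- and B-vertices of a Δ-regular bipartite graph with |A| = |B| = n and eigenvalue
ratio γ, for which the expander mixing bound hmix holds) have relative minimum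
distances δ_A and δ_B, and γ ≤ √(δ_Aδ_B), then every nonzero codeword c of the
expander code has Hamming weight at least ((δ_Aδ_B − γ√(δ_Aδ_B))/(1−γ))·Δn, i.e.
the relative minimum distance of the expander code is at least
(δ_Aδ_B − γ√(δ_Aδ_B))/(1−γ). -/
theorem stmt19 {A B E F : Type*} [Fintype A] [Fintype B] [Fintype E]
    [DecidableEq A] [DecidableEq B] [DecidableEq E]
    [Field F] [Fintype F] [DecidableEq F]
    (endA : E → A) (endB : E → B) (Δ n : ℕ)
    (hregA : ∀ a, Fintype.card {e : E // endA e = a} = Δ)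
    (hregB : ∀ b, Fintype.card {e : E // endB e = b} = Δ)
    (hnA : Fintype.card A = n) (hnB : Fintype.card B = n)
    (γ : ℝ) (hγ0 : 0 ≤ γ) (hγ1 : γ < 1)
    (hmix : ∀ (UA : Finset A) (UB : Finset B),
      ((Finset.univ.filter (fun e => endA e ∈ UA ∧ endB e ∈ UB)).card : ℝ) ≤
        ((1 - γ) * ((UA.card : ℝ)/n * ((UB.card : ℝ)/n))
          + γ * Real.sqrt ((UA.card : ℝ)/n * ((UB.card : ℝ)/n))) * (Δ * n))
    (δA δB : ℝ) (hδA0 : 0 < δA) (hδA1 : δA ≤ 1) (hδB0 : 0 < δB) (hδB1 : δB ≤ 1)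
    (hγδ : γ ≤ Real.sqrt (δA * δB))
    (CA : (a : A) → Submodule F ({e : E // endA e = a} → F))
    (CB : (b : B) → Submodule F ({e : E // endB e = b} → F))
    (hdA : ∀ a, ∀ x ∈ CA a, x ≠ 0 → δA * Δ ≤
      ((Finset.univ.filter (fun e : {e : E // endA e = a} => x e ≠ 0)).card : ℝ))
    (hdB : ∀ b, ∀ x ∈ CB b, x ≠ 0 → δB * Δ ≤
      ((Finset.univ.filter (fun e : {e : E // endB e = b} => x e ≠ 0)).card : ℝ))
    (c : E → F)
    (hcA : ∀ a, (fun e : {e : E // endA e = a} => c e.1) ∈ CA a)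
    (hcB : ∀ b, (fun e : {e : E // endB e = b} => c e.1) ∈ CB b)
    (hc0 : c ≠ 0) :
    (δA * δB - γ * Real.sqrt (δA * δB)) / (1 - γ) * (Δ * n) ≤
      ((Finset.univ.filter (fun e => c e ≠ 0)).card : ℝ) := by
  classical
  obtain ⟨e0, he0⟩ : ∃ e, c e ≠ 0 := Function.ne_iff.mp hc0
  set S : Finset E := univ.filter (fun e => c e ≠ 0) with hSdef
  have hnpos : 0 < n := by
    rw [← hnA]; exact Fintype.card_pos_iff.mpr ⟨endA e0⟩
  have hΔpos : 0 < Δ := by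
    rw [← hregA (endA e0)]; exact Fintype.card_pos_iff.mpr ⟨⟨e0, rfl⟩⟩
  set UA : Finset A := S.image endA with hUAdef
  set UB : Finset B := S.image endB with hUBdef
  have fibA : ∀ a ∈ UA, δA * Δ ≤ ((S.filter (fun e => endA e = a)).card : ℝ) := by
    intro a ha
    obtain ⟨e, heS, hea⟩ := Finset.mem_image.mp ha
    have heS' : c e ≠ 0 := (Finset.mem_filter.mp heS).2
    have hx0 : (fun e : {e : E // endA e = a} => c e.1) ≠ 0 := by
      intro h; exact heS' (congrFun h ⟨e, hea⟩)
    have hb := hdA a _ (hcA a) hx0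
    have hcard : (univ.filter (fun e : {e : E // endA e = a} => c e.1 ≠ 0)).card
        = (S.filter (fun e => endA e = a)).card := by
      apply Finset.card_bij (fun e _ => e.1)
      · intro x hx
        simp only [Finset.mem_filter, Finset.mem_univ, true_and, hSdef] at hx ⊢
        exact ⟨hx, x.2⟩
      · intro x _ y _ h; exact Subtype.ext h
      · intro y hy
        simp only [Finset.mem_filter, Finset.mem_univ, true_and, hSdef] at hy
        exact ⟨⟨y, hy.2⟩, by simpa using hy.1, rfl⟩
    rw [hcard] at hb; exact hb
  have fibB : ∀ b ∈ UB, δB * Δ ≤ ((S.filter (fun e => endB e = b)).card : ℝ) := by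
    intro b hbm
    obtain ⟨e, heS, hea⟩ := Finset.mem_image.mp hbm
    have heS' : c e ≠ 0 := (Finset.mem_filter.mp heS).2
    have hx0 : (fun e : {e : E // endB e = b} => c e.1) ≠ 0 := by
      intro h; exact heS' (congrFun h ⟨e, hea⟩)
    have hb := hdB b _ (hcB b) hx0
    have hcard : (univ.filter (fun e : {e : E // endB e = b} => c e.1 ≠ 0)).card
        = (S.filter (fun e => endB e = b)).card := by
      apply Finset.card_bij (fun e _ => e.1)
      · intro x hx
        simp only [Finset.mem_filter, Finset.mem_univ, true_and, hSdef] at hx ⊢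
        exact ⟨hx, x.2⟩
      · intro x _ y _ h; exact Subtype.ext h
      · intro y hy
        simp only [Finset.mem_filter, Finset.mem_univ, true_and, hSdef] at hy
        exact ⟨⟨y, hy.2⟩, by simpa using hy.1, rfl⟩
    rw [hcard] at hb; exact hb
  have sumA : δA * Δ * UA.card ≤ (S.card : ℝ) := by
    have hsum : S.card = ∑ a ∈ UA, (S.filter (fun e => endA e = a)).card :=
      Finset.card_eq_sum_card_fiberwise (fun e he => Finset.mem_image_of_mem endA he)
    calc δA * Δ * UA.card = ∑ _a ∈ UA, δA * Δ := by
          rw [Finset.sum_const, nsmul_eq_mul]; ring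
      _ ≤ ∑ a ∈ UA, ((S.filter (fun e => endA e = a)).card : ℝ) :=
          Finset.sum_le_sum fibA
      _ = (S.card : ℝ) := by rw [hsum]; push_cast; ring
  have sumB : δB * Δ * UB.card ≤ (S.card : ℝ) := by
    have hsum : S.card = ∑ b ∈ UB, (S.filter (fun e => endB e = b)).card :=
      Finset.card_eq_sum_card_fiberwise (fun e he => Finset.mem_image_of_mem endB he)
    calc δB * Δ * UB.card = ∑ _b ∈ UB, δB * Δ := by
          rw [Finset.sum_const, nsmul_eq_mul]; ring
      _ ≤ ∑ b ∈ UB, ((S.filter (fun e => endB e = b)).card : ℝ) :=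
          Finset.sum_le_sum fibB
      _ = (S.card : ℝ) := by rw [hsum]; push_cast; ring
  have hsub : S ⊆ univ.filter (fun e => endA e ∈ UA ∧ endB e ∈ UB) := by
    intro e he
    simp only [Finset.mem_filter, Finset.mem_univ, true_and]
    exact ⟨Finset.mem_image_of_mem _ he, Finset.mem_image_of_mem _ he⟩
  have hwmix : (S.card : ℝ) ≤
      ((1 - γ) * ((UA.card : ℝ)/n * ((UB.card : ℝ)/n))
        + γ * Real.sqrt ((UA.card : ℝ)/n * ((UB.card : ℝ)/n))) * (Δ * n) :=
    le_trans (Nat.cast_le.mpr (Finset.card_le_card hsub)) (hmix UA UB)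
  -- pass to real arithmetic
  set a : ℝ := (UA.card : ℝ) with hadef
  set b : ℝ := (UB.card : ℝ) with hbdef
  set w : ℝ := (S.card : ℝ) with hwdef
  set N : ℝ := (n : ℝ) with hNdef
  set D : ℝ := (Δ : ℝ) with hDdef
  set s : ℝ := Real.sqrt (δA * δB) with hsdef
  set t : ℝ := Real.sqrt (a/N * (b/N)) with htdef
  have hNpos : 0 < N := by rw [hNdef]; exact_mod_cast hnpos
  have hDpos : 0 < D := by rw [hDdef]; exact_mod_cast hΔpos
  have ha0 : 0 ≤ a := Nat.cast_nonneg _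
  have hb0 : 0 ≤ b := Nat.cast_nonneg _
  have hwpos : 0 < w := by
    have : e0 ∈ S := by simp [hSdef, he0]
    rw [hwdef]; exact_mod_cast Finset.card_pos.mpr ⟨e0, this⟩
  have hs0 : 0 < s := Real.sqrt_pos.mpr (mul_pos hδA0 hδB0)
  have hs2 : s * s = δA * δB := Real.mul_self_sqrt (mul_pos hδA0 hδB0).le
  have ht0 : 0 ≤ t := Real.sqrt_nonneg _
  have ht2 : t * t = a/N * (b/N) := Real.mul_self_sqrt (by positivity)
  have hab : a * b = t * t * (N * N) := by
    rw [ht2]; field_simp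
  have h12 : (δA * D * a) * (δB * D * b) ≤ w * w :=
    mul_le_mul sumA sumB (by positivity) (by positivity)
  have hX0 : 0 ≤ s * (D * N) * t :=
    mul_nonneg (mul_nonneg hs0.le (mul_pos hDpos hNpos).le) ht0
  have hXsq : (s * (D * N) * t) * (s * (D * N) * t) = (δA * D * a) * (δB * D * b) := by
    calc (s * (D * N) * t) * (s * (D * N) * t)
        = (s * s) * (D * D) * (t * t * (N * N)) := by ring
      _ = (δA * δB) * (D * D) * (a * b) := by rw [hs2, ← hab]
      _ = (δA * D * a) * (δB * D * b) := by ring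
  have hX2le : (s * (D * N) * t) * (s * (D * N) * t) ≤ w * w := hXsq ▸ h12
  have key1 : s * (D * N) * t ≤ w := by
    nlinarith [hX2le, hX0, hwpos]
  have hwmix2 : w ≤ ((1-γ)*t + γ) * (t * (D * N)) := by
    calc w ≤ ((1 - γ) * (a/N * (b/N)) + γ * t) * (D * N) := hwmix
      _ = ((1-γ)*t + γ) * (t * (D * N)) := by rw [← ht2]; ring
  have hcoef : 0 ≤ (1-γ)*t + γ := by nlinarith
  have key2 : s ≤ (1-γ)*t + γ := by
    nlinarith [mul_le_mul_of_nonneg_left hwmix2 hs0.le,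
      mul_le_mul_of_nonneg_left key1 hcoef, hwpos, hs0]
  rw [← hs2, div_mul_eq_mul_div, div_le_iff₀ (by linarith : (0:ℝ) < 1 - γ)]
  nlinarith [mul_le_mul_of_nonneg_left key2 (by positivity : (0:ℝ) ≤ s * (D * N)),
    mul_le_mul_of_nonneg_left key1 (by linarith : (0:ℝ) ≤ 1 - γ), ht0]
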